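/- For every time-dependent transition kernel κ : ℕ → X → PMF X, every x ∈ X and every t ≤ H, the safe probability is unchanged by the absorbing modification: Ψ_κ(x, t) = Ψ_{κ̃}(x, t). -/

import Mathlib

open scoped BigOperators

/-- Trajectory distribution of the time-dependent kernel `κ` started at state `x` at time `t`,
run for `n` further steps: a PMF on functions `Fin (n+1) → X` recording `X_t, ..., X_{t+n}`,
with `X_t = x` and `X_{s+1} ~ κ s (X_s)` sampled via iterated `PMF.bind`. -/
noncomputable def traj {X : Type*} (κ : ℕ → X → PMF X) : ℕ → (n : ℕ) → X → PMF (Fin (n + 1) → X)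
  | _, 0, x => PMF.pure fun _ => x
  | t, n + 1, x => (κ t x).bind fun x' => (traj κ (t + 1) n x').map (Fin.cons x)

/-- Safe probability `Ψ_κ(x, t)`: the probability, under the trajectory distribution of `κ`
started at `x` at time `t` over horizon `H`, that every state of the trajectory lies in the
safe set `C`. -/
noncomputable def safeProb {X : Type*} [Fintype X] [DecidableEq X]
    (C : Set X) [DecidablePred (· ∈ C)] (κ : ℕ → X → PMF X) (H t : ℕ) (x : X) : ℝ :=
  ∑ f : Fin (H - t + 1) → X,
    if ∀ i : Fin (H - t + 1), f i ∈ C then ((traj κ t (H - t) x) f).toReal else 0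

section Aux

set_option linter.unusedSectionVars false

variable {X : Type*} [Fintype X] [DecidableEq X] (C : Set X) [DecidablePred (· ∈ C)]

/-- Auxiliary: the (ENNReal-valued) probability of staying in `C` for `n` steps. -/
noncomputable def safeSum (κ : ℕ → X → PMF X) (n t : ℕ) (x : X) : ENNReal :=
  ∑ f : Fin (n + 1) → X, if ∀ i, f i ∈ C then traj κ t n x f else 0

lemma safeSum_succ (κ : ℕ → X → PMF X) (n t : ℕ) (x : X) :
    safeSum C κ (n+1) t x
      = if x ∈ C then ∑ x' : X, κ t x x' * safeSum C κ n (t+1) x' else 0 := by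
  simp only [safeSum, traj, PMF.bind_apply, tsum_fintype]
  have key : ∀ f : Fin (n+2) → X,
      (if ∀ i, f i ∈ C then ∑ x' : X, κ t x x' * ((traj κ (t+1) n x').map (Fin.cons x)) f else 0)
      = ∑ x' : X, κ t x x' * (if ∀ i, f i ∈ C then ((traj κ (t+1) n x').map (Fin.cons x)) f else 0) := by
    intro f
    split_ifs with h
    · rfl
    · simp
  rw [Finset.sum_congr rfl fun f _ => key f, Finset.sum_comm]
  have inner : ∀ x' : X,
      (∑ f : Fin (n+2) → X, if ∀ i, f i ∈ C then ((traj κ (t+1) n x').map (Fin.cons x)) f else 0)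
      = if x ∈ C then safeSum C κ n (t+1) x' else 0 := by
    intro x'
    rw [← (Fin.consEquiv (fun _ : Fin (n+2) => X)).sum_comp
      (fun f => if ∀ i, f i ∈ C then ((traj κ (t+1) n x').map (Fin.cons x)) f else 0)]
    simp only [Fintype.sum_prod_type, Fin.consEquiv, Equiv.coe_fn_mk, PMF.map_apply,
      tsum_fintype, Fin.cons_inj, Fin.forall_fin_succ, Fin.cons_zero, Fin.cons_succ,
      eq_comm (b := x), ite_and, Finset.sum_ite_eq, Finset.sum_ite_eq', Finset.mem_univ,
      if_true]
    have step1 : ∀ (x1 : X) (g : Fin (n+1) → X),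
        (∑ h : Fin (n+1) → X, if x = x1 then if g = h then (traj κ (t+1) n x') h else 0 else 0)
        = if x = x1 then (traj κ (t+1) n x') g else 0 := by
      intro x1 g
      split_ifs with h1 <;> simp
    simp only [step1]
    by_cases hx : x ∈ C
    · rw [Finset.sum_eq_single x ?_ ?_]
      · simp [hx, safeSum, Fin.forall_fin_succ, ite_and]
      · intro b _ hb
        apply Finset.sum_eq_zero; intro g _
        simp [Ne.symm hb]
      · intro h; exact absurd (Finset.mem_univ x) h
    · simp only [hx, if_false]
      apply Finset.sum_eq_zero; intro x1 _
      apply Finset.sum_eq_zero; intro g _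
      split_ifs with h1 h2 h3 h4 <;> first | rfl | exact absurd (h4 ▸ h1) hx
  have outer : ∀ x' : X,
      (∑ f : Fin (n+2) → X, κ t x x' * (if ∀ i, f i ∈ C then ((traj κ (t+1) n x').map (Fin.cons x)) f else 0))
      = κ t x x' * (if x ∈ C then safeSum C κ n (t+1) x' else 0) := fun x' => by
    rw [← Finset.mul_sum, inner x']
  rw [Finset.sum_congr rfl fun x' _ => outer x']
  by_cases h : x ∈ C <;> simp [h, safeSum]

lemma safeSum_absorb (κ : ℕ → X → PMF X) :
    ∀ (n t : ℕ) (x : X),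
      safeSum C κ n t x
        = safeSum C (fun s y => if y ∈ C then κ s y else PMF.pure y) n t x := by
  intro n
  induction n with
  | zero => intro t x; simp [safeSum, traj]
  | succ n ih =>
    intro t x
    rw [safeSum_succ, safeSum_succ]
    by_cases hx : x ∈ C
    · simp only [hx, if_true]
      exact Finset.sum_congr rfl fun x' _ => by rw [ih]
    · simp [hx]

lemma safeProb_eq_safeSum (κ : ℕ → X → PMF X) (H t : ℕ) (x : X) :
    safeProb C κ H t x = (safeSum C κ (H - t) t x).toReal := by
  rw [safeProb, safeSum, ENNReal.toReal_sum]
  · exact Finset.sum_congr rfl fun f _ => by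
      rw [apply_ite ENNReal.toReal, ENNReal.toReal_zero]
  · intro f _
    split_ifs
    · exact PMF.apply_ne_top _ _
    · exact ENNReal.zero_ne_top

end Aux

/-- **First step of Proposition 1.** The safe probability is unchanged when `κ` is replaced by
its absorbing modification (which behaves like `κ` on the safe set `C` and stays put outside). -/
theorem safeProb_absorbing_modification
    {X : Type*} [Fintype X] [Nonempty X] [DecidableEq X]
    (C : Set X) [DecidablePred (· ∈ C)] (H : ℕ)
    (κ : ℕ → X → PMF X) (x : X) (t : ℕ) (ht : t ≤ H) :
    safeProb C κ H t x
      = safeProb C (fun s y => if y ∈ C then κ s y else PMF.pure y) H t x := by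
  rw [safeProb_eq_safeSum, safeProb_eq_safeSum, safeSum_absorb]
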